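/- Let S be a semigroup and let T be a completely isolated subsemigroup of S. Let K be any one of the relations ≤_R, ≤_L, ≤_J, R, L, or J. Then for all x, y ∈ T, x K y holds in S if and only if x K y holds in T. -/

import Mathlib

/-! Green's preorders and equivalences on a semigroup `S`, defined via ideals in
`S¹ = WithOne S` (the semigroup with an adjoined identity). -/

section Green
variable {S : Type*} [Semigroup S]

/-- The right ideal `s·S¹` as a subset of `S¹`. -/
def rIdeal (s : S) : Set (WithOne S) := {x | ∃ z : WithOne S, x = (s : WithOne S) * z}

/-- The left ideal `S¹·s` as a subset of `S¹`. -/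
def lIdeal (s : S) : Set (WithOne S) := {x | ∃ z : WithOne S, x = z * (s : WithOne S)}

/-- The two-sided ideal `S¹·s·S¹` as a subset of `S¹`. -/
def jIdeal (s : S) : Set (WithOne S) :=
  {x | ∃ z₁ z₂ : WithOne S, x = z₁ * (s : WithOne S) * z₂}

/-- Green's preorder `s ≤_R t` : `sS¹ ⊆ tS¹`. -/
def leR (s t : S) : Prop := rIdeal s ⊆ rIdeal t

/-- Green's preorder `s ≤_L t` : `S¹s ⊆ S¹t`. -/
def leL (s t : S) : Prop := lIdeal s ⊆ lIdeal t

/-- Green's preorder `s ≤_J t` : `S¹sS¹ ⊆ S¹tS¹`. -/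
def leJ (s t : S) : Prop := jIdeal s ⊆ jIdeal t

/-- Green's relation `R`. -/
def eqvR (s t : S) : Prop := leR s t ∧ leR t s

/-- Green's relation `L`. -/
def eqvL (s t : S) : Prop := leL s t ∧ leL t s

/-- Green's relation `J`. -/
def eqvJ (s t : S) : Prop := leJ s t ∧ leJ t s

end Green

/-- A subsemigroup `T` of `S` is completely isolated if `s₁s₂ ∈ T` implies
`s₁ ∈ T` and `s₂ ∈ T`. -/
def CompletelyIsolated {S : Type*} [Semigroup S] (T : Subsemigroup S) : Prop :=
  ∀ s₁ s₂ : S, s₁ * s₂ ∈ T → s₁ ∈ T ∧ s₂ ∈ T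

section Aux
variable {S : Type*} [Semigroup S]

lemma leR_iff (s t : S) : leR s t ↔ ∃ z : WithOne S, (s : WithOne S) = (t : WithOne S) * z := by
  constructor
  · intro h; exact h ⟨1, (mul_one _).symm⟩
  · rintro ⟨z, hz⟩ x ⟨w, hw⟩; exact ⟨z * w, by rw [hw, hz, mul_assoc]⟩

lemma leL_iff (s t : S) : leL s t ↔ ∃ z : WithOne S, (s : WithOne S) = z * (t : WithOne S) := by
  constructor
  · intro h; exact h ⟨1, (one_mul _).symm⟩
  · rintro ⟨z, hz⟩ x ⟨w, hw⟩; exact ⟨w * z, by rw [hw, hz, mul_assoc]⟩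

lemma leJ_iff (s t : S) :
    leJ s t ↔ ∃ z₁ z₂ : WithOne S, (s : WithOne S) = z₁ * (t : WithOne S) * z₂ := by
  constructor
  · intro h; exact h ⟨1, 1, by simp⟩
  · rintro ⟨z₁, z₂, hz⟩ x ⟨w₁, w₂, hw⟩
    exact ⟨w₁ * z₁, z₂ * w₂, by rw [hw, hz]; simp only [mul_assoc]⟩

variable (T : Subsemigroup S) (x y : T)

lemma exR_transfer (hT : CompletelyIsolated T) :
    (∃ z : WithOne S, ((x : S) : WithOne S) = ((y : S) : WithOne S) * z) ↔
      (∃ z : WithOne T, (x : WithOne T) = (y : WithOne T) * z) := by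
  constructor
  · rintro ⟨z, hz⟩
    induction z using WithOne.recOneCoe with
    | one =>
      refine ⟨1, ?_⟩
      rw [mul_one] at hz ⊢
      exact WithOne.coe_inj.mpr (Subtype.ext (WithOne.coe_inj.mp hz))
    | coe a =>
      rw [← WithOne.coe_mul, WithOne.coe_inj] at hz
      have ha : a ∈ T := (hT _ _ (hz ▸ x.2)).2
      refine ⟨(⟨a, ha⟩ : T), ?_⟩
      rw [← WithOne.coe_mul, WithOne.coe_inj]
      exact Subtype.ext hz
  · rintro ⟨z, hz⟩
    induction z using WithOne.recOneCoe with
    | one =>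
      rw [mul_one, WithOne.coe_inj] at hz
      exact ⟨1, by rw [mul_one, hz]⟩
    | coe a =>
      rw [← WithOne.coe_mul, WithOne.coe_inj] at hz
      exact ⟨((a : S) : WithOne S), by
        rw [← WithOne.coe_mul, WithOne.coe_inj]; exact congrArg _ hz⟩

lemma exL_transfer (hT : CompletelyIsolated T) :
    (∃ z : WithOne S, ((x : S) : WithOne S) = z * ((y : S) : WithOne S)) ↔
      (∃ z : WithOne T, (x : WithOne T) = z * (y : WithOne T)) := by
  constructor
  · rintro ⟨z, hz⟩
    induction z using WithOne.recOneCoe with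
    | one =>
      refine ⟨1, ?_⟩
      rw [one_mul] at hz ⊢
      exact WithOne.coe_inj.mpr (Subtype.ext (WithOne.coe_inj.mp hz))
    | coe a =>
      rw [← WithOne.coe_mul, WithOne.coe_inj] at hz
      have ha : a ∈ T := (hT _ _ (hz ▸ x.2)).1
      refine ⟨(⟨a, ha⟩ : T), ?_⟩
      rw [← WithOne.coe_mul, WithOne.coe_inj]
      exact Subtype.ext hz
  · rintro ⟨z, hz⟩
    induction z using WithOne.recOneCoe with
    | one =>
      rw [one_mul, WithOne.coe_inj] at hz
      exact ⟨1, by rw [one_mul, hz]⟩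
    | coe a =>
      rw [← WithOne.coe_mul, WithOne.coe_inj] at hz
      exact ⟨((a : S) : WithOne S), by
        rw [← WithOne.coe_mul, WithOne.coe_inj]; exact congrArg _ hz⟩

lemma exJ_transfer (hT : CompletelyIsolated T) :
    (∃ z₁ z₂ : WithOne S, ((x : S) : WithOne S) = z₁ * ((y : S) : WithOne S) * z₂) ↔
      (∃ z₁ z₂ : WithOne T, (x : WithOne T) = z₁ * (y : WithOne T) * z₂) := by
  constructor
  · rintro ⟨z₁, z₂, hz⟩
    induction z₁ using WithOne.recOneCoe with
    | one =>
      rw [one_mul] at hz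
      obtain ⟨w, hw⟩ := (exR_transfer T x y hT).mp ⟨z₂, hz⟩
      exact ⟨1, w, by rw [one_mul, hw]⟩
    | coe a =>
      induction z₂ using WithOne.recOneCoe with
      | one =>
        rw [mul_one] at hz
        rw [← WithOne.coe_mul, WithOne.coe_inj] at hz
        have ha : a ∈ T := (hT _ _ (hz ▸ x.2)).1
        refine ⟨(⟨a, ha⟩ : T), 1, ?_⟩
        rw [mul_one, ← WithOne.coe_mul, WithOne.coe_inj]
        exact Subtype.ext hz
      | coe b =>
        rw [← WithOne.coe_mul, ← WithOne.coe_mul, WithOne.coe_inj] at hz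
        rw [mul_assoc] at hz
        have h1 := hT _ _ (hz ▸ x.2)
        have h2 := hT _ _ h1.2
        refine ⟨(⟨a, h1.1⟩ : T), (⟨b, h2.2⟩ : T), ?_⟩
        rw [← WithOne.coe_mul, ← WithOne.coe_mul, WithOne.coe_inj]
        exact Subtype.ext (by simpa [mul_assoc] using hz)
  · rintro ⟨z₁, z₂, hz⟩
    induction z₁ using WithOne.recOneCoe with
    | one =>
      rw [one_mul] at hz
      obtain ⟨w, hw⟩ := (exR_transfer T x y hT).mpr ⟨z₂, hz⟩
      exact ⟨1, w, by rw [one_mul, hw]⟩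
    | coe a =>
      induction z₂ using WithOne.recOneCoe with
      | one =>
        rw [mul_one, ← WithOne.coe_mul, WithOne.coe_inj] at hz
        refine ⟨((a : S) : WithOne S), 1, ?_⟩
        rw [mul_one, ← WithOne.coe_mul, WithOne.coe_inj]
        exact congrArg _ hz
      | coe b =>
        rw [← WithOne.coe_mul, ← WithOne.coe_mul, WithOne.coe_inj] at hz
        refine ⟨((a : S) : WithOne S), ((b : S) : WithOne S), ?_⟩
        rw [← WithOne.coe_mul, ← WithOne.coe_mul, WithOne.coe_inj]
        exact congrArg _ hz

end Aux

/-- For a completely isolated subsemigroup `T` of a semigroup `S`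
and any of the six Green relations `K ∈ {≤_R, ≤_L, ≤_J, R, L, J}`, two elements of
`T` are `K`-related in `S` iff they are `K`-related in `T`. -/
theorem green_relations_completely_isolated {S : Type*} [Semigroup S]
    (T : Subsemigroup S) (hT : CompletelyIsolated T) (x y : T) :
    (leR (x : S) (y : S) ↔ leR x y) ∧
    (leL (x : S) (y : S) ↔ leL x y) ∧
    (leJ (x : S) (y : S) ↔ leJ x y) ∧
    (eqvR (x : S) (y : S) ↔ eqvR x y) ∧
    (eqvL (x : S) (y : S) ↔ eqvL x y) ∧
    (eqvJ (x : S) (y : S) ↔ eqvJ x y) := by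
  have hR : leR (x : S) (y : S) ↔ leR x y := by
    rw [leR_iff, leR_iff, exR_transfer T x y hT]
  have hL : leL (x : S) (y : S) ↔ leL x y := by
    rw [leL_iff, leL_iff, exL_transfer T x y hT]
  have hJ : leJ (x : S) (y : S) ↔ leJ x y := by
    rw [leJ_iff, leJ_iff, exJ_transfer T x y hT]
  have hR' := hR
  have hL' := hL
  have hJ' := hJ
  exact ⟨hR, hL, hJ,
    and_congr hR (by rw [leR_iff, leR_iff, exR_transfer T y x hT]),
    and_congr hL (by rw [leL_iff, leL_iff, exL_transfer T y x hT]),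
    and_congr hJ (by rw [leJ_iff, leJ_iff, exJ_transfer T y x hT])⟩
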